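/- Let A be a finite alphabet, P a probability distribution on A, ε > 0, and n a positive integer. Let M be the set of x^n ∈ Aⁿ with ‖P_{x^n} − P‖₁ > ε. Then Pⁿ(M) ≤ (n+1)^{#A} · 2^{−n·ε²/(2 ln 2)}. -/

import Mathlib

open Filter Finset

/-- Base-2 relative entropy (real-valued formula; meaningful when `P ≪ Q`). -/
noncomputable def klD {A : Type*} [Fintype A] (P Q : A → ℝ) : ℝ :=
  ∑ a, P a * (Real.logb 2 (P a) - Real.logb 2 (Q a))

/-- Base-2 relative entropy with value `⊤` when `P` is not absolutely continuous w.r.t. `Q`. -/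
noncomputable def klDE {A : Type*} [Fintype A] (P Q : A → ℝ) : EReal :=
  if ∀ a, Q a = 0 → P a = 0 then ((klD P Q : ℝ) : EReal) else ⊤

/-- ℓ¹ distance. -/
noncomputable def l1 {A : Type*} [Fintype A] (P Q : A → ℝ) : ℝ := ∑ a, |P a - Q a|

/-- Probability distribution on a finite set. -/
def IsProbDist {A : Type*} [Fintype A] (P : A → ℝ) : Prop := (∀ a, 0 ≤ P a) ∧ ∑ a, P a = 1

/-- Empirical distribution (type) of a sequence. -/
noncomputable def emp {A : Type*} [Fintype A] [DecidableEq A] {n : ℕ} (x : Fin n → A) : A → ℝ :=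
  fun a => ((Finset.univ.filter fun i => x i = a).card : ℝ) / n

/-- Product (i.i.d.) measure of a set of sequences. -/
noncomputable def prodP {A : Type*} [Fintype A] (Q : A → ℝ) {n : ℕ} (M : Set (Fin n → A)) : ℝ :=
  ∑ x : Fin n → A, Set.indicator M (fun y => ∏ i, Q (y i)) x

/-- Base-2 logarithm with value `⊥` at nonpositive reals. -/
noncomputable def elog2 (t : ℝ) : EReal := if t ≤ 0 then ⊥ else ((Real.logb 2 t : ℝ) : EReal)

private lemma aux_mono : MonotoneOn (fun x : ℝ => Real.log x - 2*(x-1)/(x+1)) (Set.Ioi 0) := by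
  have hd : ∀ x ∈ Set.Ioi (0:ℝ), HasDerivAt (fun x : ℝ => Real.log x - 2*(x-1)/(x+1))
      (1/x - 4/(x+1)^2) x := by
    intro x hx
    have hx0 : (0:ℝ) < x := hx
    have h1 : HasDerivAt Real.log (1/x) x := by
      simpa [one_div] using Real.hasDerivAt_log (ne_of_gt hx0)
    have h2 : HasDerivAt (fun x : ℝ => 2*(x-1)) 2 x := by
      simpa using ((hasDerivAt_id x).sub_const 1).const_mul 2
    have h3 : HasDerivAt (fun x : ℝ => x+1) 1 x := (hasDerivAt_id x).add_const 1
    have hne : x + 1 ≠ 0 := by linarith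
    have h4 := h2.div h3 hne
    have := h1.sub h4
    exact this.congr_deriv (by ring)
  refine monotoneOn_of_hasDerivWithinAt_nonneg (convex_Ioi 0)
    (fun x hx => (hd x hx).continuousAt.continuousWithinAt)
    (fun x hx => ((hd x (by simpa [interior_Ioi] using hx)).hasDerivWithinAt)) ?_
  intro x hx
  rw [interior_Ioi] at hx
  have hx0 : (0:ℝ) < x := hx
  rw [sub_nonneg, div_le_div_iff₀ (by positivity) hx0]
  nlinarith [sq_nonneg (x-1)]

private lemma log_ge_one_le {x : ℝ} (hx : 1 ≤ x) : 2*(x-1)/(x+1) ≤ Real.log x := by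
  have h := aux_mono (Set.mem_Ioi.2 one_pos) (Set.mem_Ioi.2 (lt_of_lt_of_le one_pos hx)) hx
  simp only [Real.log_one] at h
  have : (0:ℝ) - 2*(1-1)/(1+1) ≤ Real.log x - 2*(x-1)/(x+1) := h
  linarith [this]

private lemma log_le_le_one {x : ℝ} (h0 : 0 < x) (hx : x ≤ 1) : Real.log x ≤ 2*(x-1)/(x+1) := by
  have h := aux_mono (Set.mem_Ioi.2 h0) (Set.mem_Ioi.2 one_pos) hx
  simp only [Real.log_one] at h
  have : Real.log x - 2*(x-1)/(x+1) ≤ (0:ℝ) - 2*(1-1)/(1+1) := h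
  linarith [this]

private lemma phi_lower {x : ℝ} (hx : 0 ≤ x) :
    3*(x-1)^2/(2*(x+2)) ≤ x * Real.log x - x + 1 := by
  rcases eq_or_lt_of_le hx with h0 | h0
  · rw [← h0]
    norm_num [Real.log_zero]
  set f : ℝ → ℝ := fun x => x * Real.log x - x + 1 - 3*(x-1)^2/(2*(x+2)) with hf
  set f' : ℝ → ℝ := fun x => Real.log x - 3*((x-1)*(x+5))/(2*(x+2)^2) with hf'
  have hd : ∀ y : ℝ, 0 < y → HasDerivAt f (f' y) y := by
    intro y hy
    have hA : HasDerivAt (fun x : ℝ => x * Real.log x) (Real.log y + 1) y :=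
      Real.hasDerivAt_mul_log (ne_of_gt hy)
    have hB : HasDerivAt (fun x : ℝ => 3*(x-1)^2) (3*(2*(y-1))) y := by
      have h := (((hasDerivAt_id y).sub_const 1).pow 2).const_mul (3:ℝ)
      simpa using h
    have hC : HasDerivAt (fun x : ℝ => 2*(x+2)) 2 y := by
      simpa using ((hasDerivAt_id y).add_const 2).const_mul (2:ℝ)
    have hne : 2*(y+2) ≠ 0 := by positivity
    have hD := hB.div hC hne
    have := ((hA.sub (hasDerivAt_id y)).add_const 1).sub hD
    refine this.congr_deriv ?_
    rw [hf']
    have hne2 : (y + 2) ≠ 0 := by positivity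
    field_simp
    ring
  have hsign_ge : ∀ y : ℝ, 1 ≤ y → 0 ≤ f' y := by
    intro y hy
    have h1 := log_ge_one_le hy
    have h2 : 3*((y-1)*(y+5))/(2*(y+2)^2) ≤ 2*(y-1)/(y+1) := by
      rw [div_le_div_iff₀ (by positivity) (by positivity)]
      nlinarith [sq_nonneg (y-1), mul_nonneg (sub_nonneg.2 hy) (sq_nonneg (y-1))]
    simp only [hf', sub_nonneg]
    linarith
  have hsign_le : ∀ y : ℝ, 0 < y → y ≤ 1 → f' y ≤ 0 := by
    intro y hy0 hy
    have h1 := log_le_le_one hy0 hy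
    have h2 : 2*(y-1)/(y+1) ≤ 3*((y-1)*(y+5))/(2*(y+2)^2) := by
      rw [div_le_div_iff₀ (by positivity) (by positivity)]
      nlinarith [sq_nonneg (y-1), mul_nonneg (sub_nonneg.2 hy) (sq_nonneg (y-1))]
    simp only [hf', sub_nonpos]
    linarith
  have hf1 : f 1 = 0 := by norm_num [hf, Real.log_one]
  have key : 0 ≤ f x := by
    rcases le_total x 1 with hle | hge
    · have hmono : AntitoneOn f (Set.Ioc 0 1) := by
        refine antitoneOn_of_hasDerivWithinAt_nonpos (convex_Ioc 0 1)
          (fun y hy => (hd y hy.1).continuousAt.continuousWithinAt)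
          (fun y hy => ((hd y (by
            rw [interior_Ioc] at hy; exact hy.1)).hasDerivWithinAt)) ?_
        intro y hy
        rw [interior_Ioc] at hy
        exact hsign_le y hy.1 (le_of_lt hy.2)
      have := hmono (Set.mem_Ioc.2 ⟨h0, hle⟩) (Set.mem_Ioc.2 ⟨one_pos, le_refl 1⟩) hle
      rw [hf1] at this
      exact this
    · have hmono : MonotoneOn f (Set.Ici 1) := by
        refine monotoneOn_of_hasDerivWithinAt_nonneg (convex_Ici 1)
          (fun y hy => (hd y (lt_of_lt_of_le one_pos hy)).continuousAt.continuousWithinAt)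
          (fun y hy => ((hd y (by
            rw [interior_Ici] at hy; exact lt_trans one_pos hy)).hasDerivWithinAt)) ?_
        intro y hy
        rw [interior_Ici] at hy
        exact hsign_ge y (le_of_lt hy)
      have := hmono (Set.mem_Ici.2 (le_refl 1)) (Set.mem_Ici.2 hge) hge
      rw [hf1] at this
      exact this
  simp only [hf] at key
  linarith

private lemma pinsker {A : Type*} [Fintype A] (P Q : A → ℝ)
    (hP : IsProbDist P) (hQ : IsProbDist Q) (habs : ∀ a, P a = 0 → Q a = 0) :
    (l1 Q P) ^ 2 ≤ 2 * ∑ a, Q a * (Real.log (Q a) - Real.log (P a)) := by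
  classical
  set S : Finset A := univ.filter (fun a => 0 < P a) with hS
  have hPa := hP.1
  have hQa := hQ.1
  have hPoff : ∀ a ∉ S, P a = 0 := by
    intro a ha
    rw [hS] at ha
    simp only [mem_filter, mem_univ, true_and, not_lt] at ha
    exact le_antisymm ha (hPa a)
  have hQoff : ∀ a ∉ S, Q a = 0 := fun a ha => habs a (hPoff a ha)
  have hPpos : ∀ a ∈ S, 0 < P a := by
    intro a ha; rw [hS] at ha; exact (mem_filter.1 ha).2
  have hPsum : ∑ a ∈ S, P a = 1 := by
    rw [← hP.2]
    exact Finset.sum_subset (subset_univ S) (fun a _ ha => hPoff a ha)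
  have hQsum : ∑ a ∈ S, Q a = 1 := by
    rw [← hQ.2]
    exact Finset.sum_subset (subset_univ S) (fun a _ ha => hQoff a ha)
  set t : A → ℝ := fun a => Q a / P a with ht
  have htnn : ∀ a, 0 ≤ t a := fun a => div_nonneg (hQa a) (hPa a)
  -- l1 rewrite
  have hl1 : l1 Q P = ∑ a ∈ S, P a * |t a - 1| := by
    rw [l1, ← Finset.sum_subset (subset_univ S)
      (fun a _ ha => by rw [hPoff a ha, hQoff a ha]; simp)]
    refine Finset.sum_congr rfl fun a ha => ?_
    have hp := hPpos a ha
    rw [← abs_of_pos hp, ← abs_mul, abs_of_pos hp]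
    congr 1
    simp only [ht]; field_simp
  -- D rewrite
  have hD : ∑ a, Q a * (Real.log (Q a) - Real.log (P a))
      = ∑ a ∈ S, P a * (t a * Real.log (t a) - t a + 1) := by
    rw [← Finset.sum_subset (subset_univ S)
      (fun a _ ha => by rw [hQoff a ha]; ring)]
    have step : ∀ a ∈ S, P a * (t a * Real.log (t a) - t a + 1)
        = Q a * (Real.log (Q a) - Real.log (P a)) - Q a + P a := by
      intro a ha
      have hp := hPpos a ha
      rcases eq_or_lt_of_le (hQa a) with hq0 | hq0
      · rw [← hq0]
        have : t a = 0 := by rw [ht]; simp [← hq0]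
        rw [this]
        simp [Real.log_zero]
      · have hta : t a = Q a / P a := rfl
        have h1 : Real.log (t a) = Real.log (Q a) - Real.log (P a) := by
          rw [hta, Real.log_div (ne_of_gt hq0) (ne_of_gt hp)]
        rw [h1]
        have h2 : P a * t a = Q a := by simp only [ht]; field_simp
        have h3 : P a * (t a * (Real.log (Q a) - Real.log (P a)) - t a + 1)
            = (P a * t a) * (Real.log (Q a) - Real.log (P a)) - P a * t a + P a := by ring
        rw [h3, h2]
    rw [Finset.sum_congr rfl step, Finset.sum_add_distrib, Finset.sum_sub_distrib, hPsum, hQsum]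
    ring
  -- Cauchy-Schwarz
  set u : A → ℝ := fun a => Real.sqrt (P a * (3*(t a - 1)^2/(2*(t a + 2)))) with hu
  set v : A → ℝ := fun a => Real.sqrt (P a * (2*(t a + 2)/3)) with hv
  have huv : ∀ a ∈ S, u a * v a = P a * |t a - 1| := by
    intro a ha
    have hp := hPpos a ha
    have ht2 : 0 < t a + 2 := by linarith [htnn a]
    rw [hu, hv, ← Real.sqrt_mul (mul_nonneg (hPa a) (div_nonneg (by positivity) (by linarith)))]
    have heq : P a * (3*(t a - 1)^2/(2*(t a + 2))) * (P a * (2*(t a + 2)/3))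
        = (P a * |t a - 1|)^2 := by
      rw [mul_pow, sq_abs]
      field_simp
    rw [heq, Real.sqrt_sq (mul_nonneg (hPa a) (abs_nonneg _))]
  have hCS := Finset.sum_mul_sq_le_sq_mul_sq S u v
  have hu2 : ∀ a ∈ S, u a ^ 2 = P a * (3*(t a - 1)^2/(2*(t a + 2))) := by
    intro a ha
    have ht2 : 0 < t a + 2 := by linarith [htnn a]
    exact Real.sq_sqrt (mul_nonneg (hPa a) (div_nonneg (by positivity) (by linarith)))
  have hv2 : ∀ a ∈ S, v a ^ 2 = P a * (2*(t a + 2)/3) := by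
    intro a ha
    have ht2 : 0 < t a + 2 := by linarith [htnn a]
    exact Real.sq_sqrt (mul_nonneg (hPa a) (div_nonneg (by linarith) (by norm_num)))
  have hsumv : ∑ a ∈ S, v a ^ 2 = 2 := by
    rw [Finset.sum_congr rfl hv2]
    have : ∀ a ∈ S, P a * (2*(t a + 2)/3) = (2/3) * Q a + (4/3) * P a := by
      intro a ha
      have hp := hPpos a ha
      have h2 : P a * t a = Q a := by simp only [ht]; field_simp
      nlinarith [h2]
    rw [Finset.sum_congr rfl this, Finset.sum_add_distrib, ← Finset.mul_sum, ← Finset.mul_sum,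
      hPsum, hQsum]
    norm_num
  have hsumu : ∑ a ∈ S, u a ^ 2 ≤ ∑ a, Q a * (Real.log (Q a) - Real.log (P a)) := by
    rw [hD, Finset.sum_congr rfl hu2]
    refine Finset.sum_le_sum fun a ha => ?_
    exact mul_le_mul_of_nonneg_left (phi_lower (htnn a)) (hPa a)
  have hDnn : 0 ≤ ∑ a ∈ S, u a ^ 2 := Finset.sum_nonneg fun a _ => sq_nonneg _
  calc (l1 Q P)^2 = (∑ a ∈ S, u a * v a)^2 := by
        rw [hl1, Finset.sum_congr rfl huv]
    _ ≤ (∑ a ∈ S, u a ^ 2) * ∑ a ∈ S, v a ^ 2 := hCS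
    _ = 2 * ∑ a ∈ S, u a ^ 2 := by rw [hsumv]; ring
    _ ≤ 2 * ∑ a, Q a * (Real.log (Q a) - Real.log (P a)) := by linarith [hsumu]

private lemma prod_eq_prod_pow {A : Type*} [Fintype A] [DecidableEq A] {n : ℕ}
    (P : A → ℝ) (x : Fin n → A) :
    ∏ i, P (x i) = ∏ a, P a ^ (univ.filter fun i => x i = a).card := by
  rw [← Finset.prod_fiberwise univ (fun i => x i) (fun i => P (x i))]
  refine Finset.prod_congr rfl fun a _ => ?_
  rw [Finset.prod_congr rfl (fun i hi => by rw [(Finset.mem_filter.1 hi).2] :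
    ∀ i ∈ univ.filter fun i => x i = a, P (x i) = P a), Finset.prod_const]


private lemma sum_cnt {A : Type*} [Fintype A] [DecidableEq A] {n : ℕ} (x : Fin n → A) :
    ∑ a, (univ.filter fun i => x i = a).card = n := by
  rw [← Finset.card_eq_sum_card_fiberwise (fun i _ => Finset.mem_univ (x i))]
  simp

private lemma type_bound {A : Type*} [Fintype A] [DecidableEq A] (P : A → ℝ) (hP : IsProbDist P)
    {ε : ℝ} (hε : 0 < ε) {n : ℕ} (hn : 0 < n) (c : A → ℕ) (hc : ∑ a, c a = n)
    (hl1 : ε < l1 (fun a => (c a : ℝ) / n) P) :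
    ∑ x ∈ univ.filter (fun x : Fin n → A => ∀ a, (univ.filter fun i => x i = a).card = c a),
      ∏ i, P (x i) ≤ Real.exp (-(n : ℝ) * ε ^ 2 / 2) := by
  classical
  have hn' : (0:ℝ) < n := by exact_mod_cast hn
  set Q : A → ℝ := fun a => (c a : ℝ) / n with hQdef
  have hQ : IsProbDist Q := by
    constructor
    · intro a; positivity
    · rw [hQdef, ← Finset.sum_div]
      rw [show ∑ a, ((c a : ℝ)) = (n:ℝ) by exact_mod_cast congrArg Nat.cast hc]
      field_simp
  set T := univ.filter (fun x : Fin n → A => ∀ a, (univ.filter fun i => x i = a).card = c a)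
    with hT
  have hsumT : ∑ x ∈ T, ∏ i, P (x i) = (T.card : ℝ) * ∏ a, P a ^ c a := by
    rw [Finset.sum_congr rfl (fun x hx => ?_), Finset.sum_const, nsmul_eq_mul]
    rw [prod_eq_prod_pow]
    exact Finset.prod_congr rfl fun a _ => by rw [(Finset.mem_filter.1 hx).2 a]
  by_cases hcase : ∃ a, P a = 0 ∧ 0 < c a
  · obtain ⟨a, hpa, hca⟩ := hcase
    have : ∏ a, P a ^ c a = 0 :=
      Finset.prod_eq_zero (Finset.mem_univ a) (by rw [hpa]; exact zero_pow (by omega))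
    rw [hsumT, this, mul_zero]
    positivity
  push_neg at hcase
  have habs : ∀ a, P a = 0 → Q a = 0 := by
    intro a hpa
    have := hcase a hpa
    rw [hQdef]
    simp [Nat.le_zero.1 this]
  -- Pinsker bound
  have hpin := pinsker P Q hP hQ habs
  have hDge : ε ^ 2 / 2 ≤ ∑ a, Q a * (Real.log (Q a) - Real.log (P a)) := by
    have h1 : ε ^ 2 ≤ (l1 Q P) ^ 2 := by
      apply pow_le_pow_left₀ (le_of_lt hε) (le_of_lt hl1)
    linarith
  -- counting bound : T.card * ∏ Q^c ≤ 1
  have hcount : (T.card : ℝ) * ∏ a, Q a ^ c a ≤ 1 := by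
    have h1 : (1:ℝ) = ∑ x : Fin n → A, ∏ i, Q (x i) := by
      rw [← Fintype.piFinset_univ, ← Finset.sum_pow' univ Q n, hQ.2, one_pow]
    have h2 : ∑ x ∈ T, ∏ i, Q (x i) = (T.card : ℝ) * ∏ a, Q a ^ c a := by
      rw [Finset.sum_congr rfl (fun x hx => ?_), Finset.sum_const, nsmul_eq_mul]
      rw [prod_eq_prod_pow]
      exact Finset.prod_congr rfl fun a _ => by rw [(Finset.mem_filter.1 hx).2 a]
    rw [← h2, h1]
    refine Finset.sum_le_sum_of_subset_of_nonneg (Finset.subset_univ T) fun x _ _ => ?_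
    exact Finset.prod_nonneg fun i _ => hQ.1 _
  -- change of measure
  have hPprod : ∏ a, P a ^ c a
      = (∏ a, Q a ^ c a) * ∏ a, Real.exp ((c a : ℝ) * (Real.log (P a) - Real.log (Q a))) := by
    rw [← Finset.prod_mul_distrib]
    refine Finset.prod_congr rfl fun a _ => ?_
    rcases Nat.eq_zero_or_pos (c a) with h0 | h0
    · simp [h0]
    · have hqa : 0 < Q a := by
        rw [hQdef]
        have : (0:ℝ) < (c a : ℝ) := by exact_mod_cast h0
        positivity
      have hpa : 0 < P a := by
        rcases eq_or_lt_of_le (hP.1 a) with h | h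
        · exact absurd (hcase a h.symm) (by omega)
        · exact h
      rw [show Real.log (P a) - Real.log (Q a) = Real.log (P a / Q a) by
        rw [Real.log_div (ne_of_gt hpa) (ne_of_gt hqa)]]
      rw [Real.exp_nat_mul, Real.exp_log (by positivity)]
      rw [← mul_pow, mul_div_cancel₀ _ (ne_of_gt hqa)]
  have hexpsum : ∏ a, Real.exp ((c a : ℝ) * (Real.log (P a) - Real.log (Q a)))
      = Real.exp (-(n:ℝ) * ∑ a, Q a * (Real.log (Q a) - Real.log (P a))) := by
    rw [← Real.exp_sum]
    congr 1
    rw [Finset.mul_sum]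
    refine Finset.sum_congr rfl fun a _ => ?_
    have hca : (c a : ℝ) = (n:ℝ) * Q a := by
      rw [hQdef]
      field_simp
    rw [hca]
    ring
  -- put together
  have hexp_nonneg : (0:ℝ) ≤ Real.exp (-(n:ℝ) * ∑ a, Q a * (Real.log (Q a) - Real.log (P a))) :=
    le_of_lt (Real.exp_pos _)
  have hTQ_nonneg : (0:ℝ) ≤ (T.card : ℝ) * ∏ a, Q a ^ c a := by
    have := Finset.prod_nonneg (fun a (_ : a ∈ univ) => pow_nonneg (hQ.1 a) (c a))
    positivity
  calc ∑ x ∈ T, ∏ i, P (x i)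
      = ((T.card : ℝ) * ∏ a, Q a ^ c a) *
        Real.exp (-(n:ℝ) * ∑ a, Q a * (Real.log (Q a) - Real.log (P a))) := by
        rw [hsumT, hPprod, hexpsum]; ring
    _ ≤ 1 * Real.exp (-(n:ℝ) * ∑ a, Q a * (Real.log (Q a) - Real.log (P a))) :=
        mul_le_mul_of_nonneg_right hcount hexp_nonneg
    _ ≤ Real.exp (-(n : ℝ) * ε ^ 2 / 2) := by
        rw [one_mul]
        apply Real.exp_le_exp.2
        have : (0:ℝ) ≤ (n:ℝ) := le_of_lt hn'
        nlinarith [hDge]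


/-- Large deviations of the empirical distribution:
`Pⁿ{x : ‖P_x − P‖₁ > ε} ≤ (n+1)^{#A} · 2^{−n ε²/(2 ln 2)}`. -/
theorem empirical_distribution_deviation {A : Type*} [Fintype A] [DecidableEq A]
    (P : A → ℝ) (hP : IsProbDist P) (ε : ℝ) (hε : 0 < ε) (n : ℕ) (hn : 0 < n) :
    prodP P {x : Fin n → A | l1 (emp x) P > ε} ≤
      ((n : ℝ) + 1) ^ (Fintype.card A) * (2 : ℝ) ^ (-(n : ℝ) * ε ^ 2 / (2 * Real.log 2)) := by
  classical
  -- rewrite prodP as a filtered sum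
  have hrw : prodP P {x : Fin n → A | l1 (emp x) P > ε} =
      ∑ x ∈ univ.filter (fun x : Fin n → A => ε < l1 (emp x) P), ∏ i, P (x i) := by
    rw [prodP, Finset.sum_filter]
    refine Finset.sum_congr rfl fun x _ => ?_
    simp only [Set.indicator_apply, Set.mem_setOf_eq, gt_iff_lt]
  set F := univ.filter (fun x : Fin n → A => ε < l1 (emp x) P) with hF
  have hcnt_le : ∀ (x : Fin n → A) (a : A), (univ.filter fun i => x i = a).card < n + 1 := by
    intro x a
    have := Finset.card_filter_le (univ : Finset (Fin n)) (fun i => x i = a)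
    simp only [Finset.card_univ, Fintype.card_fin] at this
    omega
  set g : (Fin n → A) → (A → Fin (n+1)) := fun x a => ⟨_, hcnt_le x a⟩ with hg
  have hfib := Finset.sum_fiberwise F g (fun x => ∏ i, P (x i))
  have hbound : ∀ cf : A → Fin (n+1),
      ∑ x ∈ F.filter (fun x => g x = cf), ∏ i, P (x i) ≤ Real.exp (-(n:ℝ) * ε^2 / 2) := by
    intro cf
    rcases Finset.eq_empty_or_nonempty (F.filter fun x => g x = cf) with he | ⟨x₀, hx₀⟩
    · rw [he, Finset.sum_empty]
      positivity
    · rw [Finset.mem_filter] at hx₀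
      obtain ⟨hx₀F, hx₀g⟩ := hx₀
      rw [hF, Finset.mem_filter] at hx₀F
      set c : A → ℕ := fun a => (cf a : ℕ) with hcdef
      have hcval : ∀ a, (univ.filter fun i => x₀ i = a).card = c a := by
        intro a
        rw [hcdef, ← hx₀g]
      have hc : ∑ a, c a = n := by
        rw [← Finset.sum_congr rfl (fun a _ => hcval a), sum_cnt]
      have hl1' : ε < l1 (fun a => (c a : ℝ) / n) P := by
        have : emp x₀ = fun a => (c a : ℝ) / n := by
          funext a
          rw [emp, hcval a]
        rw [← this]
        exact hx₀F.2
      refine le_trans (Finset.sum_le_sum_of_subset_of_nonneg ?_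
        (fun x _ _ => Finset.prod_nonneg fun i _ => hP.1 _))
        (type_bound P hP hε hn c hc hl1')
      intro x hx
      rw [Finset.mem_filter] at hx ⊢
      refine ⟨Finset.mem_univ _, fun a => ?_⟩
      have : g x a = cf a := by rw [hx.2]
      simp only [hcdef]
      rw [← this]
  -- conclusion
  have hcard : (Fintype.card (A → Fin (n+1)) : ℝ) = ((n:ℝ)+1) ^ (Fintype.card A) := by
    rw [Fintype.card_fun, Fintype.card_fin]
    push_cast
    ring
  have hrhs : (2 : ℝ) ^ (-(n : ℝ) * ε ^ 2 / (2 * Real.log 2)) = Real.exp (-(n:ℝ) * ε^2 / 2) := by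
    rw [Real.rpow_def_of_pos (by norm_num : (0:ℝ) < 2)]
    congr 1
    have h2 : Real.log 2 ≠ 0 := ne_of_gt (Real.log_pos one_lt_two)
    field_simp
  calc prodP P {x : Fin n → A | l1 (emp x) P > ε}
      = ∑ cf : A → Fin (n+1), ∑ x ∈ F.filter (fun x => g x = cf), ∏ i, P (x i) := by
        rw [hrw, ← hfib]
    _ ≤ ∑ _cf : A → Fin (n+1), Real.exp (-(n:ℝ) * ε^2 / 2) :=
        Finset.sum_le_sum fun cf _ => hbound cf
    _ = (Fintype.card (A → Fin (n+1)) : ℝ) * Real.exp (-(n:ℝ) * ε^2 / 2) := by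
        rw [Finset.sum_const, nsmul_eq_mul, Finset.card_univ]
    _ = ((n : ℝ) + 1) ^ (Fintype.card A) * (2 : ℝ) ^ (-(n : ℝ) * ε ^ 2 / (2 * Real.log 2)) := by
        rw [hcard, hrhs]
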